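/- arXiv:2007.10635 — 2 statements merged into one kernel-verified Lean document; each statement's English description precedes it below -/
import Mathlib

section
/- Assume τ = 0. Then Θ♭(Λ) = {θ_0(Λ)} for every Λ ∈ S_{n,δ}. -/
namespace PanUnitary

/-- `part μ i` : the `i`-th largest element (0-indexed) of the multiset `μ`, `0` beyond.
Viewing a multiset of naturals as a partition (identified up to trailing zeros),
this is the `(i+1)`-st part. -/
def part (μ : Multiset ℕ) (i : ℕ) : ℕ := ((μ.sort (· ≤ ·)).reverse).getD i 0

/-- Remove the zero parts: the canonical (zero-free) representative of a partition. -/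
def strip (μ : Multiset ℕ) : Multiset ℕ := μ.filter (fun x => 0 < x)

/-- `transpose μ j` is the `(j+1)`-st part of the transposed (conjugate) partition. -/
def transpose (μ : Multiset ℕ) (j : ℕ) : ℕ := (μ.filter (fun x => j < x)).card

/-- `Preceq f g` : the partition whose parts are given by `f` is `⪯` the one given by `g`,
i.e. `g i - 1 ≤ f i ≤ g i` for all `i`. -/
def Preceq (f g : ℕ → ℕ) : Prop := ∀ i, g i ≤ f i + 1 ∧ f i ≤ g i

/-- An integer `δ` is admissible if it is even and nonnegative, or odd and negative. -/
def IsAdmissible (δ : ℤ) : Prop := (Even δ ∧ 0 ≤ δ) ∨ (Odd δ ∧ δ < 0)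

/-- `ε = 1` if `δ` is even, `ε = 0` if `δ` is odd. -/
def eps (δ : ℤ) : ℕ := if Even δ then 1 else 0

/-- `d (d + 1) / 2` where `d = |δ|`. -/
def halfTri (δ : ℤ) : ℕ := δ.natAbs * (δ.natAbs + 1) / 2

/-- A symbol: a pair of rows of natural numbers (the strict-decrease condition is
part of the predicate `Symbol.IsUnitary`). -/
structure Symbol where
  A : List ℕ
  B : List ℕ

def Symbol.defect (Λ : Symbol) : ℤ := (Λ.A.length : ℤ) - (Λ.B.length : ℤ)

/-- The row `(a_1, …, a_m)` gives the partition with parts `(a_i - e)/2 - (m - i)`. -/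
def upsRow (L : List ℕ) (e : ℕ) : Multiset ℕ :=
  ((L.mapIdx fun i a => (a - e) / 2 - (L.length - 1 - i) : List ℕ) : Multiset ℕ)

/-- The bipartition `Υ(Λ)` (canonical zero-free representatives). -/
def Symbol.Upsilon (Λ : Symbol) : Multiset ℕ × Multiset ℕ :=
  (strip (upsRow Λ.A (eps Λ.defect)), strip (upsRow Λ.B (1 - eps Λ.defect)))

/-- `Λ` is a unitary-type symbol of (admissible) defect `δ`. -/
def Symbol.IsUnitary (Λ : Symbol) (δ : ℤ) : Prop :=
  Λ.A.Pairwise (· > ·) ∧ Λ.B.Pairwise (· > ·) ∧ Λ.defect = δ ∧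
    (∀ a ∈ Λ.A, a % 2 = eps δ) ∧ (∀ b ∈ Λ.B, b % 2 = 1 - eps δ)

/-- The rank `2(|μ| + |ν|) + d(d+1)/2` of a unitary-type symbol. -/
def Symbol.rank (Λ : Symbol) : ℕ :=
  2 * (Λ.Upsilon.1.sum + Λ.Upsilon.2.sum) + halfTri Λ.defect

/-- Equivalence of symbols: same defect and same `Υ`. -/
def Symbol.Equiv (Λ Λ' : Symbol) : Prop :=
  Λ.defect = Λ'.defect ∧ Λ.Upsilon = Λ'.Upsilon

/-- Membership in `S_{n,δ}`: a unitary-type symbol of admissible defect `δ` and rank `n`. -/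
def InS (n : ℕ) (δ : ℤ) (Λ : Symbol) : Prop :=
  IsAdmissible δ ∧ Λ.IsUnitary δ ∧ Λ.rank = n

/-- `Σ min(x,y)` over all unordered pairs of (positions of) entries of the list. -/
def pairMinSum : List ℕ → ℕ
  | [] => 0
  | x :: xs => (xs.map (fun y => min x y)).sum + pairMinSum xs

/-- All entries of a symbol (both rows). -/
def Symbol.entries (Λ : Symbol) : List ℕ := Λ.A ++ Λ.B

/-- `ord(Λ) = Σ min(x,y) − Σ_{i=1}^{⌊N/2⌋} (N − 2i)²`. -/
def Symbol.ord (Λ : Symbol) : ℤ :=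
  (pairMinSum Λ.entries : ℤ) -
    ∑ i ∈ Finset.Icc 1 (Λ.entries.length / 2),
      ((Λ.entries.length : ℤ) - 2 * (i : ℤ)) ^ 2

/-- The shift of a unitary-type symbol. -/
def Symbol.shift (Λ : Symbol) : Symbol :=
  ⟨Λ.A.map (fun a => a + 2) ++ [eps Λ.defect],
   Λ.B.map (fun b => b + 2) ++ [1 - eps Λ.defect]⟩

/-- The defect `δ'` for the second member of the dual pair. -/
def deltaPrime (n n' : ℕ) (δ : ℤ) : ℤ :=
  if Even (n + n') then (if δ = 0 then 0 else -δ + 1) else -δ - 1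

/-- `τ = ((n' − d'(d'+1)/2) − (n − d(d+1)/2)) / 2`. -/
def tau (n n' : ℕ) (δ : ℤ) : ℚ :=
  (((n' : ℚ) - (halfTri (deltaPrime n n' δ) : ℚ)) - ((n : ℚ) - (halfTri δ : ℚ))) / 2

/-- `τ` as a natural number (equal to `τ` whenever `τ` is a nonnegative integer). -/
def tauNat (n n' : ℕ) (δ : ℤ) : ℕ :=
  ((n' + halfTri δ) - (n + halfTri (deltaPrime n n' δ))) / 2

/-- The set of (canonical, zero-free) bipartitions `(μ;ν)` with
`2(|μ|+|ν|) + d(d+1)/2 = n`; equivalently `|μ|+|ν| = (n − d(d+1)/2)/2`. -/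
def BipSet (n : ℕ) (δ : ℤ) : Set (Multiset ℕ × Multiset ℕ) :=
  {p | (∀ x ∈ p.1, 0 < x) ∧ (∀ x ∈ p.2, 0 < x) ∧ 2 * (p.1.sum + p.2.sum) + halfTri δ = n}

/-- The `⪯`-conditions (on transposes) defining the relation `Θ`, at the level of
bipartitions `p = Υ(Λ)`, `q = Υ(Λ')`. -/
def PrecCond (n n' : ℕ) (p q : Multiset ℕ × Multiset ℕ) : Prop :=
  if Even (n + n') then
    Preceq (transpose p.2) (transpose q.1) ∧ Preceq (transpose q.2) (transpose p.1)
  else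
    Preceq (transpose p.1) (transpose q.2) ∧ Preceq (transpose q.1) (transpose p.2)

/-- `Θ` at the level of bipartitions (classes of symbols). -/
def ThetaB (n n' : ℕ) (δ : ℤ) (p q : Multiset ℕ × Multiset ℕ) : Prop :=
  q ∈ BipSet n' (deltaPrime n n' δ) ∧ PrecCond n n' p q

/-- `Λ' ∈ Θ(Λ)` for symbols, where `Λ ∈ S_{n,δ}`. -/
def InTheta (n n' : ℕ) (δ : ℤ) (Λ Λ' : Symbol) : Prop :=
  InS n' (deltaPrime n n' δ) Λ' ∧ PrecCond n n' Λ.Upsilon Λ'.Upsilon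

/-- `Λ' ∈ Θ(Λ)_k`. -/
def InThetaK (n n' : ℕ) (δ : ℤ) (k : ℕ) (Λ Λ' : Symbol) : Prop :=
  InTheta n n' δ Λ Λ' ∧
    (if Even (n + n') then (Λ'.Upsilon.2.sum : ℤ) = (Λ.Upsilon.1.sum : ℤ) - (k : ℤ)
     else (Λ'.Upsilon.1.sum : ℤ) = (Λ.Upsilon.2.sum : ℤ) - (k : ℤ))

/-- Remove (one copy of) the largest part. -/
def mtail (μ : Multiset ℕ) : Multiset ℕ := μ.erase (part μ 0)

/-- `θ_k` at the level of bipartitions: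
even case: `(μ;ν) ↦ (sort(ν, τ+k); sort(μ_2, …, μ_{m_1}, μ_1 − k))`;
odd case: `(μ;ν) ↦ (sort(ν_2, …, ν_{m_2}, ν_1 − k); sort(μ, τ+k))`. -/
def thetaBip (n n' : ℕ) (δ : ℤ) (k : ℕ) (p : Multiset ℕ × Multiset ℕ) :
    Multiset ℕ × Multiset ℕ :=
  if Even (n + n') then
    (strip ((tauNat n n' δ + k) ::ₘ p.2), strip ((part p.1 0 - k) ::ₘ mtail p.1))
  else
    (strip ((part p.2 0 - k) ::ₘ mtail p.2), strip ((tauNat n n' δ + k) ::ₘ p.1))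

/-- The unitary-type symbol of defect `δ` with `Υ = p`, whose first row has `m1`
entries and second row `m2` entries (valid whenever `m1, m2` are large enough). -/
def symbolOfBip (δ : ℤ) (p : Multiset ℕ × Multiset ℕ) (m1 m2 : ℕ) : Symbol :=
  ⟨List.ofFn (fun i : Fin m1 => 2 * (part p.1 (i : ℕ) + (m1 - 1 - (i : ℕ))) + eps δ),
   List.ofFn (fun j : Fin m2 => 2 * (part p.2 (j : ℕ) + (m2 - 1 - (j : ℕ))) + (1 - eps δ))⟩

/-- A canonical representative symbol of defect `δ` with `Υ = p`. -/
def canonicalSymbol (δ : ℤ) (p : Multiset ℕ × Multiset ℕ) : Symbol :=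
  symbolOfBip δ p (max p.1.card ((p.2.card : ℤ) + δ).toNat)
    (((max p.1.card ((p.2.card : ℤ) + δ).toNat : ℤ) - δ).toNat)

/-- A symbol representing the class `θ_k(Λ)`. -/
def thetaSymbol (n n' : ℕ) (δ : ℤ) (k : ℕ) (Λ : Symbol) : Symbol :=
  canonicalSymbol (deltaPrime n n' δ) (thetaBip n n' δ k Λ.Upsilon)

/-- `K(Λ)`: `μ_1` in the even case, `ν_1` in the odd case. -/
def bigK (n n' : ℕ) (Λ : Symbol) : ℕ :=
  if Even (n + n') then part Λ.Upsilon.1 0 else part Λ.Upsilon.2 0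

/-- `ord` at the level of bipartitions (well defined on classes). -/
def ordB (δ : ℤ) (p : Multiset ℕ × Multiset ℕ) : ℤ := (canonicalSymbol δ p).ord

/-- Strict lexicographic order on partitions. -/
def PartLexLt (μ ν : Multiset ℕ) : Prop :=
  ∃ i, (∀ j < i, part μ j = part ν j) ∧ part μ i < part ν i

/-- The total order on `S_{n,δ}` (and on `S_{n',δ'}`), at the level of bipartitions;
it depends only on the parity of `n + n'`. -/
def BLt (n n' : ℕ) (p q : Multiset ℕ × Multiset ℕ) : Prop :=
  if Even (n + n') then
    p.1.sum < q.1.sum ∨ (p.1.sum = q.1.sum ∧ PartLexLt p.1 q.1) ∨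
      (p.1 = q.1 ∧ PartLexLt p.2 q.2)
  else
    p.2.sum < q.2.sum ∨ (p.2.sum = q.2.sum ∧ PartLexLt p.2 q.2) ∨
      (p.2 = q.2 ∧ PartLexLt p.1 q.1)

/-- `q ∈ Θ♭(p)` relative to a given partial function `bar` (playing the role of `θ̄`). -/
def InFlat (n n' : ℕ) (δ : ℤ)
    (bar : Multiset ℕ × Multiset ℕ → Option (Multiset ℕ × Multiset ℕ))
    (p q : Multiset ℕ × Multiset ℕ) : Prop :=
  ThetaB n n' δ p q ∧ ∀ r ∈ BipSet n δ, BLt n n' r p → bar r ≠ some q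

/-- `bar` is the partial function `θ̄` defined by recursion along the total order:
on each `p ∈ S_{n,δ}`, if `Θ♭(p) ≠ ∅` then `bar p` is defined and is the smallest
element (w.r.t. the total order) of maximal `ord` in `Θ♭(p)`. -/
def IsThetaBar (n n' : ℕ) (δ : ℤ)
    (bar : Multiset ℕ × Multiset ℕ → Option (Multiset ℕ × Multiset ℕ)) : Prop :=
  (∀ p, p ∉ BipSet n δ → bar p = none) ∧
  ∀ p ∈ BipSet n δ,
    ((∃ q, InFlat n n' δ bar p q) → ∃ q, bar p = some q) ∧
    ∀ q, bar p = some q →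
      InFlat n n' δ bar p q ∧
      (∀ r, InFlat n n' δ bar p r →
        ordB (deltaPrime n n' δ) r ≤ ordB (deltaPrime n n' δ) q) ∧
      (∀ r, InFlat n n' δ bar p r →
        ordB (deltaPrime n n' δ) r = ordB (deltaPrime n n' δ) q → r ≠ q → BLt n n' q r)


lemma preceq_refl (f : ℕ → ℕ) : Preceq f f := fun i => ⟨Nat.le_succ _, le_refl _⟩

lemma partLexLt_irrefl (μ : Multiset ℕ) : ¬ PartLexLt μ μ := fun ⟨_, _, h⟩ => lt_irrefl _ h

lemma transpose_cons (x : ℕ) (μ : Multiset ℕ) (j : ℕ) :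
    transpose (x ::ₘ μ) j = (if j < x then 1 else 0) + transpose μ j := by
  simp only [transpose, Multiset.filter_cons]
  split <;> simp [Nat.add_comm]

lemma sum_transpose (μ : Multiset ℕ) (B : ℕ) (h : ∀ x ∈ μ, x ≤ B) :
    ∑ j ∈ Finset.range B, transpose μ j = μ.sum := by
  induction μ using Multiset.induction with
  | empty => simp [transpose]
  | cons x s ih =>
    have hx : x ≤ B := h x (Multiset.mem_cons_self _ _)
    have hs := ih (fun y hy => h y (Multiset.mem_cons_of_mem hy))
    simp only [transpose_cons, Finset.sum_add_distrib, hs, Multiset.sum_cons]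
    congr 1
    rw [Finset.sum_boole]
    have : (Finset.range B).filter (fun j => j < x) = Finset.range x := by
      ext j; simp [Finset.mem_filter, Finset.mem_range]; omega
    simp [this]

lemma elem_le_sum {μ : Multiset ℕ} {x : ℕ} (hx : x ∈ μ) : x ≤ μ.sum :=
  Multiset.single_le_sum (fun _ _ => Nat.zero_le _) x hx

lemma sum_le_of_transpose_le {μ ν : Multiset ℕ}
    (h : ∀ j, transpose μ j ≤ transpose ν j) : μ.sum ≤ ν.sum := by
  have e1 := sum_transpose μ (μ.sum + ν.sum) (fun x hx => le_trans (elem_le_sum hx) (Nat.le_add_right _ _))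
  have e2 := sum_transpose ν (μ.sum + ν.sum) (fun x hx => le_trans (elem_le_sum hx) (Nat.le_add_left _ _))
  have h3 := Finset.sum_le_sum (s := Finset.range (μ.sum + ν.sum)) (fun j _ => h j)
  rw [e1, e2] at h3
  exact h3

lemma transpose_eq_zero {μ : Multiset ℕ} {j : ℕ} (h : ∀ x ∈ μ, x ≤ j) : transpose μ j = 0 := by
  unfold transpose
  rw [Multiset.card_eq_zero, Multiset.filter_eq_nil]
  intro a ha
  have := h a ha
  omega

lemma transpose_count (μ : Multiset ℕ) (m : ℕ) :
    transpose μ m = transpose μ (m + 1) + μ.count (m + 1) := by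
  induction μ using Multiset.induction with
  | empty => simp [transpose]
  | cons x s ih =>
    rw [transpose_cons, transpose_cons, Multiset.count_cons]
    split_ifs <;> omega

lemma eq_of_transpose_le_of_sum_eq {μ ν : Multiset ℕ}
    (hμ : ∀ x ∈ μ, 0 < x) (hν : ∀ x ∈ ν, 0 < x)
    (hle : ∀ j, transpose μ j ≤ transpose ν j) (hs : μ.sum = ν.sum) : μ = ν := by
  set B := μ.sum + ν.sum with hB
  have hbμ : ∀ x ∈ μ, x ≤ B := fun x hx => le_trans (elem_le_sum hx) (Nat.le_add_right _ _)
  have hbν : ∀ x ∈ ν, x ≤ B := fun x hx => le_trans (elem_le_sum hx) (Nat.le_add_left _ _)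
  have hsums : ∑ j ∈ Finset.range B, transpose μ j = ∑ j ∈ Finset.range B, transpose ν j := by
    rw [sum_transpose μ B hbμ, sum_transpose ν B hbν, hs]
  have hall : ∀ j, transpose μ j = transpose ν j := by
    intro j
    by_cases hj : j < B
    · exact (Finset.sum_eq_sum_iff_of_le (fun i _ => hle i)).mp hsums j (Finset.mem_range.mpr hj)
    · rw [transpose_eq_zero (fun x hx => le_trans (hbμ x hx) (by omega)),
          transpose_eq_zero (fun x hx => le_trans (hbν x hx) (by omega))]
  rw [Multiset.ext]
  intro m
  match m with
  | 0 =>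
    rw [Multiset.count_eq_zero.mpr (fun hc => lt_irrefl 0 (hμ 0 hc)),
        Multiset.count_eq_zero.mpr (fun hc => lt_irrefl 0 (hν 0 hc))]
  | m + 1 =>
    have h1 := transpose_count μ m
    have h2 := transpose_count ν m
    have e1 := hall m
    have e2 := hall (m + 1)
    omega

lemma strip_eq_self {μ : Multiset ℕ} (h : ∀ x ∈ μ, 0 < x) : strip μ = μ :=
  Multiset.filter_eq_self.mpr h

lemma part_mem {μ : Multiset ℕ} (h : μ ≠ 0) : part μ 0 ∈ μ := by
  have hl : μ.sort (· ≤ ·) ≠ [] := by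
    intro hc
    apply h
    have := congrArg List.length hc
    rw [Multiset.length_sort] at this
    exact Multiset.card_eq_zero.mp this
  have h2 : part μ 0 ∈ (μ.sort (· ≤ ·)).reverse := by
    unfold part
    rcases hL : (μ.sort (· ≤ ·)).reverse with _ | ⟨a, l⟩
    · exact absurd (by simpa using hL) hl
    · simp
  rw [List.mem_reverse] at h2
  exact (Multiset.mem_sort _).mp h2

lemma strip_part_cons_mtail {μ : Multiset ℕ} (h : ∀ x ∈ μ, 0 < x) :
    strip (part μ 0 ::ₘ mtail μ) = μ := by
  by_cases hμ : μ = 0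
  · subst hμ
    simp [part, mtail, strip, Multiset.filter_singleton]
  · rw [mtail, Multiset.cons_erase (part_mem hμ)]
    exact strip_eq_self h

lemma strip_zero_cons (μ : Multiset ℕ) (h : ∀ x ∈ μ, 0 < x) : strip (0 ::ₘ μ) = μ := by
  rw [strip, Multiset.filter_cons_of_neg _ (by simp)]
  exact strip_eq_self h
lemma key (n n' : ℕ) (δ : ℤ)
    (hsum : n' + halfTri δ = n + halfTri (deltaPrime n n' δ))
    (bar : Multiset ℕ × Multiset ℕ → Option (Multiset ℕ × Multiset ℕ))
    (hbar : IsThetaBar n n' δ bar) :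
    ∀ (N : ℕ) (p : Multiset ℕ × Multiset ℕ), p ∈ BipSet n δ →
      (if Even (n + n') then p.1.sum else p.2.sum) < N →
      ∀ q, InFlat n n' δ bar p q ↔ q = (p.2, p.1) := by
  set c := halfTri δ with hc
  set c' := halfTri (deltaPrime n n' δ) with hc'
  intro N
  induction N with
  | zero => intro p _ h; exact absurd h (Nat.not_lt_zero _)
  | succ N ih =>
    intro p hp hmeas q
    obtain ⟨hp1, hp2, hp3⟩ := hp
    by_cases hev : Even (n + n')
    · rw [if_pos hev] at hmeas
      constructor
      · rintro ⟨⟨hqB, hpc⟩, hex⟩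
        obtain ⟨hq1, hq2, hq3⟩ := hqB
        rw [PrecCond, if_pos hev] at hpc
        have hB : q.2.sum ≤ p.1.sum := sum_le_of_transpose_le (fun j => (hpc.2 j).2)
        by_cases hq2p1 : q.2.sum = p.1.sum
        · have e1 : q.2 = p.1 :=
            eq_of_transpose_le_of_sum_eq hq2 hp1 (fun j => (hpc.2 j).2) hq2p1
          have e2s : p.2.sum = q.1.sum := by omega
          have e2 : p.2 = q.1 :=
            eq_of_transpose_le_of_sum_eq hp2 hq1 (fun j => (hpc.1 j).2) e2s
          exact Prod.ext e2.symm e1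
        · exfalso
          have hstrict : q.2.sum < p.1.sum := lt_of_le_of_ne hB hq2p1
          have hrB : (q.2, q.1) ∈ BipSet n δ := ⟨hq2, hq1, by simp; omega⟩
          have hIH := ih (q.2, q.1) hrB (by rw [if_pos hev]; simp; omega)
          have hInFr : InFlat n n' δ bar (q.2, q.1) q := (hIH q).mpr (by simp)
          obtain ⟨q'', hq''⟩ := (hbar.2 (q.2, q.1) hrB).1 ⟨q, hInFr⟩
          have hq''eq : q'' = q := by
            have h1 := ((hbar.2 (q.2, q.1) hrB).2 q'' hq'').1
            have h2 := (hIH q'').mp h1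
            simpa using h2
          rw [hq''eq] at hq''
          exact hex (q.2, q.1) hrB
            (by unfold BLt; rw [if_pos hev]; exact Or.inl hstrict) hq''
      · rintro rfl
        refine ⟨⟨⟨hp2, hp1, by simp; omega⟩, ?_⟩, ?_⟩
        · rw [PrecCond, if_pos hev]
          exact ⟨preceq_refl _, preceq_refl _⟩
        · intro r hr hblt hbarr
          have hInFr := ((hbar.2 r hr).2 _ hbarr).1
          obtain ⟨⟨_, hpc⟩, _⟩ := hInFr
          rw [PrecCond, if_pos hev] at hpc
          have h1 : p.1.sum ≤ r.1.sum := sum_le_of_transpose_le fun j => (hpc.2 j).2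
          have h2 : r.2.sum ≤ p.2.sum := sum_le_of_transpose_le fun j => (hpc.1 j).2
          unfold BLt at hblt
          rw [if_pos hev] at hblt
          obtain ⟨hr1, hr2, hr3⟩ := hr
          rcases hblt with h | ⟨hs, hlex⟩ | ⟨he, hlex⟩
          · omega
          · have he1 : p.1 = r.1 :=
              eq_of_transpose_le_of_sum_eq hp1 hr1 (fun j => (hpc.2 j).2) hs.symm
            rw [he1] at hlex
            exact partLexLt_irrefl _ hlex
          · have hesum : r.1.sum = p.1.sum := by rw [he]
            have hs2 : r.2.sum = p.2.sum := by omega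
            have he2 : r.2 = p.2 :=
              eq_of_transpose_le_of_sum_eq hr2 hp2 (fun j => (hpc.1 j).2) hs2
            rw [he2] at hlex
            exact partLexLt_irrefl _ hlex
    · rw [if_neg hev] at hmeas
      constructor
      · rintro ⟨⟨hqB, hpc⟩, hex⟩
        obtain ⟨hq1, hq2, hq3⟩ := hqB
        rw [PrecCond, if_neg hev] at hpc
        have hB : q.1.sum ≤ p.2.sum := sum_le_of_transpose_le (fun j => (hpc.2 j).2)
        by_cases hq1p2 : q.1.sum = p.2.sum
        · have e1 : q.1 = p.2 :=
            eq_of_transpose_le_of_sum_eq hq1 hp2 (fun j => (hpc.2 j).2) hq1p2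
          have e2s : p.1.sum = q.2.sum := by omega
          have e2 : p.1 = q.2 :=
            eq_of_transpose_le_of_sum_eq hp1 hq2 (fun j => (hpc.1 j).2) e2s
          exact Prod.ext e1 e2.symm
        · exfalso
          have hstrict : q.1.sum < p.2.sum := lt_of_le_of_ne hB hq1p2
          have hrB : (q.2, q.1) ∈ BipSet n δ := ⟨hq2, hq1, by simp; omega⟩
          have hIH := ih (q.2, q.1) hrB (by rw [if_neg hev]; simp; omega)
          have hInFr : InFlat n n' δ bar (q.2, q.1) q := (hIH q).mpr (by simp)
          obtain ⟨q'', hq''⟩ := (hbar.2 (q.2, q.1) hrB).1 ⟨q, hInFr⟩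
          have hq''eq : q'' = q := by
            have h1 := ((hbar.2 (q.2, q.1) hrB).2 q'' hq'').1
            have h2 := (hIH q'').mp h1
            simpa using h2
          rw [hq''eq] at hq''
          exact hex (q.2, q.1) hrB
            (by unfold BLt; rw [if_neg hev]; exact Or.inl hstrict) hq''
      · rintro rfl
        refine ⟨⟨⟨hp2, hp1, by simp; omega⟩, ?_⟩, ?_⟩
        · rw [PrecCond, if_neg hev]
          exact ⟨preceq_refl _, preceq_refl _⟩
        · intro r hr hblt hbarr
          have hInFr := ((hbar.2 r hr).2 _ hbarr).1
          obtain ⟨⟨_, hpc⟩, _⟩ := hInFr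
          rw [PrecCond, if_neg hev] at hpc
          have h1 : r.1.sum ≤ p.1.sum := sum_le_of_transpose_le fun j => (hpc.1 j).2
          have h2 : p.2.sum ≤ r.2.sum := sum_le_of_transpose_le fun j => (hpc.2 j).2
          unfold BLt at hblt
          rw [if_neg hev] at hblt
          obtain ⟨hr1, hr2, hr3⟩ := hr
          rcases hblt with h | ⟨hs, hlex⟩ | ⟨he, hlex⟩
          · omega
          · have he2 : p.2 = r.2 :=
              eq_of_transpose_le_of_sum_eq hp2 hr2 (fun j => (hpc.2 j).2) hs.symm
            rw [he2] at hlex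
            exact partLexLt_irrefl _ hlex
          · have hesum : r.2.sum = p.2.sum := by rw [he]
            have hs2 : r.1.sum = p.1.sum := by omega
            have he1 : r.1 = p.1 :=
              eq_of_transpose_le_of_sum_eq hr1 hp1 (fun j => (hpc.1 j).2) hs2
            rw [he1] at hlex
            exact partLexLt_irrefl _ hlex

/-- If `τ = 0` then `Θ♭(Λ) = {θ_0(Λ)}` for every `Λ ∈ S_{n,δ}`. -/
theorem statement13 (n n' : ℕ) (δ : ℤ) (hδ : IsAdmissible δ) (hτ : tau n n' δ = 0) :
    ∀ bar : Multiset ℕ × Multiset ℕ → Option (Multiset ℕ × Multiset ℕ),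
      IsThetaBar n n' δ bar → ∀ p ∈ BipSet n δ,
        ∀ q, InFlat n n' δ bar p q ↔ q = thetaBip n n' δ 0 p := by
  intro bar hbar p hp q
  have hsum : n' + halfTri δ = n + halfTri (deltaPrime n n' δ) := by
    unfold tau at hτ
    have h2 : (n' : ℚ) + (halfTri δ : ℚ) = (n : ℚ) + (halfTri (deltaPrime n n' δ) : ℚ) := by
      field_simp at hτ
      linarith
    exact_mod_cast h2
  obtain ⟨hp1, hp2, hp3⟩ := hp
  have htau : tauNat n n' δ = 0 := by unfold tauNat; omega
  have h0 : thetaBip n n' δ 0 p = (p.2, p.1) := by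
    unfold thetaBip
    rw [htau]
    split
    · rw [show ((0 : ℕ) + 0) = 0 from rfl]
      rw [strip_zero_cons _ hp2]
      rw [show part p.1 0 - 0 = part p.1 0 from rfl]
      rw [strip_part_cons_mtail hp1]
    · rw [show ((0 : ℕ) + 0) = 0 from rfl]
      rw [strip_zero_cons _ hp1]
      rw [show part p.2 0 - 0 = part p.2 0 from rfl]
      rw [strip_part_cons_mtail hp2]
  rw [h0]
  exact key n n' δ hsum bar hbar (p.1.sum + p.2.sum + 1) p ⟨hp1, hp2, hp3⟩
    (by split <;> omega) q

end PanUnitary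
end

section
/- Assume n ≤ ⌊n'/2⌋. Then for every Λ ∈ S_{n,δ} with Υ(Λ) = (μ;ν): if n + n' is even then τ ≥ ν_1, and if n + n' is odd then τ ≥ μ_1; in particular τ ≥ 0 whenever S_{n,δ} is nonempty. -/
namespace PanUnitary

lemma halfTri_two (δ : ℤ) : 2 * halfTri δ = δ.natAbs * (δ.natAbs + 1) := by
  unfold halfTri
  obtain ⟨k, hk⟩ := Nat.even_mul_succ_self δ.natAbs
  omega

lemma key_s14 (n n' : ℕ) (δ : ℤ) (hδ : IsAdmissible δ) (h2 : 2 * n ≤ n') (s : ℕ)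
    (hs : 2 * s + halfTri δ = n) :
    2 * s + n + halfTri (deltaPrime n n' δ) ≤ n' + halfTri δ := by
  unfold deltaPrime
  by_cases hp : Even (n + n')
  · rw [if_pos hp]
    by_cases h0 : δ = 0
    · subst h0
      rw [if_pos rfl]
      have h1 : halfTri 0 = 0 := by decide
      omega
    · rw [if_neg h0]
      have hTδ := halfTri_two δ
      have hTδ' := halfTri_two (-δ + 1)
      rcases hδ with ⟨he, hge⟩ | ⟨ho, hlt⟩
      · -- δ even, positive
        rw [Int.even_iff] at he
        have hd2 : 2 ≤ δ.natAbs := by omega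
        have habs : (-δ + 1).natAbs = δ.natAbs - 1 := by omega
        rw [habs] at hTδ'
        obtain ⟨e, hee⟩ : ∃ e, δ.natAbs = e + 1 := ⟨δ.natAbs - 1, by omega⟩
        rw [hee] at hTδ hTδ'
        simp only [Nat.add_sub_cancel] at hTδ'
        have hrel : (e + 1) * (e + 1 + 1) = e * (e + 1) + 2 * (e + 1) := by ring
        omega
      · -- δ odd, negative
        rw [Int.odd_iff] at ho
        have hd1 : 1 ≤ δ.natAbs := by omega
        have habs : (-δ + 1).natAbs = δ.natAbs + 1 := by omega
        rw [habs] at hTδ'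
        have hrel : (δ.natAbs + 1) * (δ.natAbs + 1 + 1)
            = δ.natAbs * (δ.natAbs + 1) + 2 * (δ.natAbs + 1) := by ring
        by_cases hd3 : 2 ≤ δ.natAbs
        · have hge2 : 2 * (δ.natAbs + 1) ≤ δ.natAbs * (δ.natAbs + 1) :=
            Nat.mul_le_mul_right _ hd3
          omega
        · -- δ = -1
          have hδ1 : δ = -1 := by omega
          subst hδ1
          have e1 : halfTri (-1) = 1 := by decide
          have e2 : halfTri (-(-1) + 1) = 3 := by decide
          rw [e1] at hs ⊢
          rw [e2]
          rw [Nat.even_iff] at hp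
          omega
  · rw [if_neg hp]
    have hTδ := halfTri_two δ
    have hTδ' := halfTri_two (-δ - 1)
    rcases hδ with ⟨he, hge⟩ | ⟨ho, hlt⟩
    · -- δ even, nonnegative
      rw [Int.even_iff] at he
      have habs : (-δ - 1).natAbs = δ.natAbs + 1 := by omega
      rw [habs] at hTδ'
      have hrel : (δ.natAbs + 1) * (δ.natAbs + 1 + 1)
          = δ.natAbs * (δ.natAbs + 1) + 2 * (δ.natAbs + 1) := by ring
      by_cases hd3 : 2 ≤ δ.natAbs
      · have hge2 : 2 * (δ.natAbs + 1) ≤ δ.natAbs * (δ.natAbs + 1) :=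
          Nat.mul_le_mul_right _ hd3
        omega
      · -- δ = 0
        have hδ0 : δ = 0 := by omega
        subst hδ0
        have e1 : halfTri 0 = 0 := by decide
        have e2 : halfTri (-0 - 1) = 1 := by decide
        rw [e1] at hs ⊢
        rw [e2]
        rw [Nat.even_iff] at hp
        omega
    · -- δ odd, negative
      rw [Int.odd_iff] at ho
      have hd1 : 1 ≤ δ.natAbs := by omega
      have habs : (-δ - 1).natAbs = δ.natAbs - 1 := by omega
      rw [habs] at hTδ'
      obtain ⟨e, hee⟩ : ∃ e, δ.natAbs = e + 1 := ⟨δ.natAbs - 1, by omega⟩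
      rw [hee] at hTδ hTδ'
      simp only [Nat.add_sub_cancel] at hTδ'
      have hrel : (e + 1) * (e + 1 + 1) = e * (e + 1) + 2 * (e + 1) := by ring
      omega

lemma tau_ge (n n' : ℕ) (δ : ℤ) (hδ : IsAdmissible δ) (h2 : 2 * n ≤ n') (s : ℕ)
    (hs : 2 * s + halfTri δ = n) : (s : ℚ) ≤ tau n n' δ := by
  have hk := key_s14 n n' δ hδ h2 s hs
  have hk' : ((2 * s + n + halfTri (deltaPrime n n' δ) : ℕ) : ℚ)
      ≤ ((n' + halfTri δ : ℕ) : ℚ) := Nat.cast_le.mpr hk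
  unfold tau
  push_cast at hk' ⊢
  linarith

lemma getD_le_sum (l : List ℕ) (i : ℕ) : l.getD i 0 ≤ l.sum := by
  induction l generalizing i with
  | nil => simp
  | cons a t ih =>
    cases i with
    | zero => simp
    | succ j =>
      simp only [List.getD_cons_succ, List.sum_cons]
      exact le_trans (ih j) (Nat.le_add_left _ _)

lemma part_le_sum (μ : Multiset ℕ) (i : ℕ) : part μ i ≤ μ.sum := by
  unfold part
  refine le_trans (getD_le_sum _ _) (le_of_eq ?_)
  rw [List.sum_reverse]
  conv_rhs => rw [← Multiset.sort_eq (s := μ) (r := (· ≤ ·))]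
  rfl

/-- In the stable range `n ≤ ⌊n'/2⌋` : `τ ≥ ν₁` in the even case and `τ ≥ μ₁` in the
odd case, for every `Λ ∈ S_{n,δ}`; in particular `τ ≥ 0` whenever `S_{n,δ} ≠ ∅`. -/
theorem statement14 (n n' : ℕ) (δ : ℤ) (hδ : IsAdmissible δ) (h : n ≤ n' / 2) :
    (∀ Λ : Symbol, InS n δ Λ →
      (Even (n + n') → ((part Λ.Upsilon.2 0 : ℚ) ≤ tau n n' δ)) ∧
      (¬ Even (n + n') → ((part Λ.Upsilon.1 0 : ℚ) ≤ tau n n' δ))) ∧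
    ((∃ Λ : Symbol, InS n δ Λ) → 0 ≤ tau n n' δ) := by
  have h2 : 2 * n ≤ n' := by omega
  have main : ∀ Λ : Symbol, InS n δ Λ →
      ((Λ.Upsilon.1.sum + Λ.Upsilon.2.sum : ℚ)) ≤ tau n n' δ := by
    intro Λ hΛ
    obtain ⟨hadm, hU, hrank⟩ := hΛ
    have hδdef : Λ.defect = δ := hU.2.2.1
    have hs : 2 * (Λ.Upsilon.1.sum + Λ.Upsilon.2.sum) + halfTri δ = n := by
      rw [← hδdef]; exact hrank
    have := tau_ge n n' δ hδ h2 _ hs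
    exact_mod_cast this
  constructor
  · intro Λ hΛ
    have hmain := main Λ hΛ
    constructor <;> intro _
    · refine le_trans ?_ hmain
      have : part Λ.Upsilon.2 0 ≤ Λ.Upsilon.1.sum + Λ.Upsilon.2.sum :=
        le_trans (part_le_sum _ _) (Nat.le_add_left _ _)
      exact_mod_cast this
    · refine le_trans ?_ hmain
      have : part Λ.Upsilon.1 0 ≤ Λ.Upsilon.1.sum + Λ.Upsilon.2.sum :=
        le_trans (part_le_sum _ _) (Nat.le_add_right _ _)
      exact_mod_cast this
  · rintro ⟨Λ, hΛ⟩
    have hmain := main Λ hΛ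
    have h0 : (0 : ℚ) ≤ ((Λ.Upsilon.1.sum : ℚ) + (Λ.Upsilon.2.sum : ℚ)) := by positivity
    linarith

end PanUnitary
end
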